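/- Let T be a rooted tree with n nodes and let K ≥ 1. For each node v, let n_v be the number of descendants of v (including v) and let v₁,…,v_{d_v} be the children of v in any fixed order. Define cost(v) = 0 if v is a leaf, and otherwise cost(v) = Σ_{i=1}^{d_v} cost(v_i) + Σ_{i=1}^{d_v-1} min{n_{v₁}+⋯+n_{v_i}, K}·min{n_{v_{i+1}}, K}. Then for every node v: if n_v ≤ K, cost(v) ≤ n_v², and if n_v > K, cost(v) ≤ 2K·n_v - K². -/
import Mathlib


/-- Rooted trees with an ordered list of children. -/
inductive RTree where
  | node : List RTree → RTree

mutual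
/-- Number of nodes in the subtree rooted at `v` (including `v`). -/
def RTree.size : RTree → ℕ
  | .node cs => 1 + RTree.sizeList cs
def RTree.sizeList : List RTree → ℕ
  | [] => 0
  | t :: ts => RTree.size t + RTree.sizeList ts
end

/-- Given the running prefix sum `acc` of children sizes, adds
`min(acc,K)·min(nᵢ₊₁,K)` terms for the remaining children sizes. -/
def chainGo (K : ℕ) : ℕ → List ℕ → ℕ
  | _, [] => 0
  | acc, m :: rest => min acc K * min m K + chainGo K (acc + m) rest

/-- `Σ_{i=1}^{d-1} min(n₁+⋯+nᵢ, K)·min(nᵢ₊₁, K)` for the list of children sizes. -/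
def chainCost (K : ℕ) : List ℕ → ℕ
  | [] => 0
  | n :: rest => chainGo K n rest

mutual
/-- The recursive cost function: 0 on leaves, and otherwise the sum of children costs
plus `Σ_{i=1}^{d_v-1} min(n_{v₁}+⋯+n_{vᵢ}, K)·min(n_{vᵢ₊₁}, K)`. -/
def RTree.cost (K : ℕ) : RTree → ℕ
  | .node cs => RTree.costList K cs + chainCost K (cs.map RTree.size)
def RTree.costList (K : ℕ) : List RTree → ℕ
  | [] => 0
  | t :: ts => RTree.cost K t + RTree.costList K ts
end

def f (K n : ℕ) : ℕ := if n ≤ K then n^2 else 2*K*n - K^2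

lemma f_mono (K : ℕ) {a b : ℕ} (hab : a ≤ b) : f K a ≤ f K b := by
  unfold f
  split <;> split <;> rename_i h1 h2
  · nlinarith
  · push_neg at h2
    have : K^2 ≤ 2*K*b := by nlinarith
    zify [this]; nlinarith
  · omega
  · push_neg at h1 h2
    have ha : K^2 ≤ 2*K*a := by nlinarith
    have hb : K^2 ≤ 2*K*b := by nlinarith
    zify [ha, hb]; nlinarith

lemma key (K : ℕ) (hK : 1 ≤ K) {a b : ℕ} (ha : 1 ≤ a) (hb : 1 ≤ b) :
    f K a + f K b + min a K * min b K ≤ f K (a + b) := by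
  unfold f
  rcases le_or_gt a K with h1 | h1 <;> rcases le_or_gt b K with h2 | h2 <;>
    rcases le_or_gt (a+b) K with h3 | h3 <;>
    simp [h1, h2, h3, Nat.not_le.mpr, min_eq_left, min_eq_right] <;>
    try omega
  · nlinarith
  · have hs : K^2 ≤ 2*K*(a+b) := by nlinarith
    zify [hs]; nlinarith [sq_nonneg (a + b - K), mul_nonneg (sub_nonneg.mpr ((by exact_mod_cast h2 : (b:ℤ) ≤ K))) (sub_nonneg.mpr ((by exact_mod_cast h1 : (a:ℤ) ≤ K)))]
  · have hs : K^2 ≤ 2*K*(a+b) := by nlinarith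
    have hsb : K^2 ≤ 2*K*b := by nlinarith
    rw [min_eq_right h2.le]
    zify [hs, hsb]; nlinarith
  · have hs : K^2 ≤ 2*K*(a+b) := by nlinarith
    have hsa : K^2 ≤ 2*K*a := by nlinarith
    rw [min_eq_right h1.le]
    zify [hs, hsa]; nlinarith
  · have hs : K^2 ≤ 2*K*(a+b) := by nlinarith
    have hsa : K^2 ≤ 2*K*a := by nlinarith
    have hsb : K^2 ≤ 2*K*b := by nlinarith
    rw [min_eq_right h1.le, min_eq_right h2.le]
    zify [hs, hsa, hsb]; nlinarith
lemma chainGo_bound (K : ℕ) (hK : 1 ≤ K) :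
    ∀ (ms : List ℕ) (acc : ℕ), 1 ≤ acc → (∀ m ∈ ms, 1 ≤ m) →
    f K acc + chainGo K acc ms + (ms.map (f K)).sum ≤ f K (acc + ms.sum)
  | [], acc, _, _ => by simp [chainGo]
  | m :: rest, acc, hacc, hms => by
    have hm : 1 ≤ m := hms m (by simp)
    have ih := chainGo_bound K hK rest (acc + m) (by omega)
      (fun x hx => hms x (by simp [hx]))
    have hkey := key K hK hacc hm
    simp only [chainGo, List.map_cons, List.sum_cons]
    calc f K acc + (min acc K * min m K + chainGo K (acc + m) rest) + (f K m + (rest.map (f K)).sum)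
        = (f K acc + f K m + min acc K * min m K) + chainGo K (acc + m) rest + (rest.map (f K)).sum := by ring
      _ ≤ f K (acc + m) + chainGo K (acc + m) rest + (rest.map (f K)).sum := by omega
      _ ≤ f K (acc + m + rest.sum) := ih
      _ = f K (acc + (m + rest.sum)) := by ring_nf

lemma size_pos (t : RTree) : 1 ≤ t.size := by
  cases t with
  | node cs => simp [RTree.size]

lemma sizeList_eq (ts : List RTree) : RTree.sizeList ts = (ts.map RTree.size).sum := by
  induction ts with
  | nil => simp [RTree.sizeList]
  | cons t ts ih => simp [RTree.sizeList, ih]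

mutual
theorem costLe (K : ℕ) (hK : 1 ≤ K) : ∀ t : RTree, t.cost K ≤ f K t.size
  | .node cs => by
    have hcl := costListLe K hK cs
    show RTree.costList K cs + chainCost K (cs.map RTree.size) ≤ f K (1 + RTree.sizeList cs)
    cases cs with
    | nil =>
      simp [RTree.costList, chainCost, RTree.sizeList, f, hK]
    | cons c rest =>
      have hgo := chainGo_bound K hK (rest.map RTree.size) c.size (size_pos c)
        (by intro m hm; simp at hm; obtain ⟨t, ht, rfl⟩ := hm; exact size_pos t)
      simp only [List.map_cons, chainCost] at *
      have hmono : f K (c.size + (rest.map RTree.size).sum)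
          ≤ f K (1 + RTree.sizeList (c :: rest)) := by
        apply f_mono
        simp [RTree.sizeList, sizeList_eq]
      have : (List.map (f K) (List.map RTree.size rest)).sum
          = (rest.map (fun t => f K t.size)).sum := by
        rw [List.map_map]; rfl
      simp only [List.map_cons, List.sum_cons] at hcl
      rw [this] at hgo
      omega
theorem costListLe (K : ℕ) (hK : 1 ≤ K) : ∀ ts : List RTree,
    RTree.costList K ts ≤ (ts.map (fun t => f K t.size)).sum
  | [] => by simp [RTree.costList]
  | t :: ts => by
    simp only [RTree.costList, List.map_cons, List.sum_cons]
    exact Nat.add_le_add (costLe K hK t) (costListLe K hK ts)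
end

/-- For every node v: cost(v) ≤ n_v² if n_v ≤ K, and cost(v) ≤ 2K·n_v - K² if n_v > K. -/
theorem cost_bound (K : ℕ) (hK : 1 ≤ K) (t : RTree) :
    (t.size ≤ K → t.cost K ≤ t.size ^ 2) ∧
    (K < t.size → t.cost K ≤ 2 * K * t.size - K ^ 2) := by
  have h := costLe K hK t
  constructor
  · intro hle; rwa [f, if_pos hle] at h
  · intro hlt; rwa [f, if_neg (by omega)] at h
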